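/- Equip ℝ with the probabilistic norm ν_p = ε_{|p|/(a+|p|)} for fixed a > 0 (where ε_c is the unit step at c). Then ℝ is D-bounded and closed in this PN space, but ℝ is not D-compact: the sequence {2^m} has no strongly convergent subsequence. -/

import Mathlib

open Filter Topology

noncomputable section

/-- A distance distribution function: nondecreasing, left-continuous,
vanishing on `(-∞,0]`, bounded by `1`. -/
def DDF (F : ℝ → ℝ) : Prop :=
  Monotone F ∧ (∀ x ≤ 0, F x = 0) ∧ (∀ x, F x ≤ 1) ∧
    ∀ x, Tendsto F (nhdsWithin x (Set.Iio x)) (nhds (F x))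

/-- The unit step at `0`. -/
def eps0 : ℝ → ℝ := fun x => if x ≤ 0 then 0 else 1

/-- The unit step at `c`. -/
def epsc (c : ℝ) : ℝ → ℝ := fun x => if x ≤ c then 0 else 1

/-- `ε∞`: identically 0 on `ℝ` (value 1 only at `+∞`). -/
def epsInf : ℝ → ℝ := fun _ => 0

/-- Membership in `D⁺`: the distribution function tends to `1` at `+∞`. -/
def InDPlus (F : ℝ → ℝ) : Prop := Tendsto F atTop (nhds 1)

/-- Weak convergence of distribution functions. -/
def WeakConv (Fn : ℕ → ℝ → ℝ) (F : ℝ → ℝ) : Prop :=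
  ∀ x, ContinuousAt F x → Tendsto (fun n => Fn n x) atTop (nhds (F x))

/-- A continuous triangle function on `Δ⁺`. -/
def IsTriangleFunction (τ : (ℝ → ℝ) → (ℝ → ℝ) → (ℝ → ℝ)) : Prop :=
  (∀ F G, DDF F → DDF G → DDF (τ F G)) ∧
  (∀ F G H, DDF F → DDF G → DDF H → τ (τ F G) H = τ F (τ G H)) ∧
  (∀ F G, DDF F → DDF G → τ F G = τ G F) ∧
  (∀ F G H, DDF F → DDF G → DDF H → F ≤ G → τ F H ≤ τ G H) ∧
  (∀ F, DDF F → τ F eps0 = F) ∧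
  (∀ (Fn : ℕ → ℝ → ℝ) F G, (∀ n, DDF (Fn n)) → DDF F → DDF G →
    WeakConv Fn F → WeakConv (fun n => τ (Fn n) G) (τ F G))

/-- A probabilistic normed space `(V, ν, τ, τ*)`. -/
structure IsPNSpace (V : Type) [AddCommGroup V] [Module ℝ V]
    (ν : V → ℝ → ℝ) (τ τs : (ℝ → ℝ) → (ℝ → ℝ) → (ℝ → ℝ)) : Prop where
  ddf : ∀ p, DDF (ν p)
  tri : IsTriangleFunction τ
  tris : IsTriangleFunction τs
  tle : ∀ F G, DDF F → DDF G → τ F G ≤ τs F G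
  n1 : ∀ p, ν p = eps0 ↔ p = 0
  n2 : ∀ p, ν (-p) = ν p
  n3 : ∀ p q, τ (ν p) (ν q) ≤ ν (p + q)
  n4 : ∀ (p : V) (l : ℝ), 0 ≤ l → l ≤ 1 →
    ν p ≤ τs (ν (l • p)) (ν ((1 - l) • p))

/-- Archimedean triangle function: no idempotents besides `ε₀` and `ε∞`. -/
def IsArchimedean (τ : (ℝ → ℝ) → (ℝ → ℝ) → (ℝ → ℝ)) : Prop :=
  ∀ F, DDF F → τ F F = F → F = eps0 ∨ F = epsInf

/-- Strong convergence of a sequence in a PN space. -/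
def StrongConv {V : Type} [AddCommGroup V] (ν : V → ℝ → ℝ)
    (q : ℕ → V) (p : V) : Prop :=
  ∀ l : ℝ, 0 < l → ∀ᶠ n in atTop, ν (q n - p) l > 1 - l

/-- Strongly Cauchy sequence in a PN space. -/
def StrongCauchy {V : Type} [AddCommGroup V] (ν : V → ℝ → ℝ) (q : ℕ → V) : Prop :=
  ∀ l : ℝ, 0 < l → ∃ N, ∀ m n, N ≤ m → N ≤ n → ν (q m - q n) l > 1 - l

/-- `A` is `D`-bounded: some `G ∈ D⁺` lies below all `ν p`, `p ∈ A`. -/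
def DBounded {V : Type} (ν : V → ℝ → ℝ) (A : Set V) : Prop :=
  ∃ G : ℝ → ℝ, DDF G ∧ InDPlus G ∧ ∀ p ∈ A, G ≤ ν p

/-- `A` is `D`-compact: every sequence in `A` has a subsequence strongly
convergent to a point of `A`. -/
def DCompact {V : Type} [AddCommGroup V] (ν : V → ℝ → ℝ) (A : Set V) : Prop :=
  ∀ q : ℕ → V, (∀ n, q n ∈ A) → ∃ φ : ℕ → ℕ, StrictMono φ ∧
    ∃ p ∈ A, StrongConv ν (q ∘ φ) p

/-- `A` is closed under strong convergence of sequences. -/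
def SeqClosed {V : Type} [AddCommGroup V] (ν : V → ℝ → ℝ) (A : Set V) : Prop :=
  ∀ (q : ℕ → V) (p : V), (∀ n, q n ∈ A) → StrongConv ν q p → p ∈ A

/-- The probabilistic radius `R_A(x) = l⁻ inf {ν p x : p ∈ A}`. -/
def probRadius {V : Type} (ν : V → ℝ → ℝ) (A : Set V) (x : ℝ) : ℝ :=
  ⨆ y : Set.Iio x, ⨅ p : A, ν (p : V) (y : ℝ)

/-- With `ν p = ε_{|p|/(a+|p|)}`, `ℝ` is `D`-bounded and closed but not
`D`-compact: `{2^m}` has no strongly convergent subsequence. -/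

lemma epsc_ddf {c : ℝ} (hc : 0 ≤ c) : DDF (epsc c) := by
  refine ⟨?_, ?_, ?_, ?_⟩
  · intro x y hxy
    unfold epsc
    split_ifs with h1 h2 <;> simp_all <;> linarith
  · intro x hx; simp [epsc, hx.trans hc]
  · intro x; unfold epsc; split_ifs <;> norm_num
  · intro x
    by_cases hx : x ≤ c
    · have hfx : epsc c x = 0 := by simp [epsc, hx]
      rw [hfx]
      apply Filter.Tendsto.congr' _ tendsto_const_nhds
      filter_upwards [self_mem_nhdsWithin] with y (hy : y < x)
      simp [epsc, (hy.le.trans hx)]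
    · push_neg at hx
      have hfx : epsc c x = 1 := by simp [epsc, not_le.mpr hx]
      rw [hfx]
      apply Filter.Tendsto.congr' _ tendsto_const_nhds
      filter_upwards [nhdsWithin_le_nhds (eventually_gt_nhds hx)] with y hy
      simp [epsc, not_le.mpr hy]

theorem statement13 (a : ℝ) (ha : 0 < a) :
    DBounded (fun p : ℝ => epsc (|p| / (a + |p|))) Set.univ ∧
    SeqClosed (fun p : ℝ => epsc (|p| / (a + |p|))) Set.univ ∧
    ¬ DCompact (fun p : ℝ => epsc (|p| / (a + |p|))) Set.univ ∧
    (∀ φ : ℕ → ℕ, StrictMono φ → ∀ p : ℝ,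
      ¬ StrongConv (fun r : ℝ => epsc (|r| / (a + |r|)))
        (fun n => (2 : ℝ) ^ φ n) p) := by
  have hden : ∀ p : ℝ, 0 < a + |p| := fun p => by positivity
  have hc0 : ∀ p : ℝ, 0 ≤ |p| / (a + |p|) := fun p => by positivity
  have hc1 : ∀ p : ℝ, |p| / (a + |p|) < 1 := fun p => by
    rw [div_lt_one (hden p)]; linarith [abs_nonneg p]
  have h4 : ∀ φ : ℕ → ℕ, StrictMono φ → ∀ p : ℝ,
      ¬ StrongConv (fun r : ℝ => epsc (|r| / (a + |r|)))
        (fun n => (2 : ℝ) ^ φ n) p := by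
    intro φ hφ p hsc
    obtain ⟨N, hN⟩ := Filter.eventually_atTop.mp (hsc (1/2) (by norm_num))
    set n := max N (⌈a + |p|⌉₊ + 1) with hn
    have h2n : (n : ℝ) < 2 ^ φ n := by
      calc (n : ℝ) < (2 : ℝ) ^ n := by exact_mod_cast Nat.lt_two_pow_self
        _ ≤ 2 ^ φ n := by
          apply pow_le_pow_right₀ (by norm_num) (hφ.id_le n)
    have hna : a + |p| < (n : ℝ) := by
      have : a + |p| < (⌈a + |p|⌉₊ + 1 : ℕ) := by
        push_cast; linarith [Nat.le_ceil (a + |p|)]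
      exact this.trans_le (by exact_mod_cast le_max_right N (⌈a + |p|⌉₊ + 1))
    set d := (2:ℝ) ^ φ n - p with hd
    have hda : a < |d| := by
      have h1 : a + |p| < 2 ^ φ n := lt_trans hna h2n
      have : a < d := by
        have := abs_le.mp (le_refl |p|)
        simp only [hd]; cases abs_cases p with
        | inl h => linarith [h.1]
        | inr h => linarith [h.1]
      linarith [le_abs_self d]
    have hkey := hN n (le_max_left _ _)
    have hhalf : (1:ℝ)/2 ≤ |d| / (a + |d|) := by
      rw [le_div_iff₀ (hden d)]; linarith
    simp only [epsc, ← hd, if_pos hhalf] at hkey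
    norm_num at hkey
  refine ⟨?_, ?_, ?_, h4⟩
  · refine ⟨epsc 1, epsc_ddf (by norm_num), ?_, ?_⟩
    · apply Filter.Tendsto.congr' _ (tendsto_const_nhds (x := (1:ℝ)))
      filter_upwards [Filter.eventually_gt_atTop (1:ℝ)] with x hx
      simp [epsc, not_le.mpr hx]
    · intro p _ x
      simp only [epsc]
      split_ifs with h1 h2 h3
      · rfl
      · norm_num
      · exact absurd (le_trans h3 (hc1 p).le) h1
      · rfl
  · intro q p _ _; trivial
  · intro h
    obtain ⟨φ, hφ, p, _, hsc⟩ := h (fun n => (2:ℝ)^n) (fun _ => trivial)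
    exact h4 φ hφ p hsc
end
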